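/- Two quaternions α and β are conjugate (i.e., α = h⁻¹βh for some nonzero quaternion h) if and only if Re(α) = Re(β) and |α| = |β|. -/

import Mathlib

open Quaternion

lemma re_star_conj (h q : Quaternion ℝ) :
    (star h * q * h).re = Quaternion.normSq h * q.re := by
  simp only [Quaternion.re_mul, Quaternion.re_star, Quaternion.imI_star, Quaternion.imJ_star,
    Quaternion.imK_star, Quaternion.imI_mul, Quaternion.imJ_mul, Quaternion.imK_mul,
    Quaternion.normSq_def']
  ring

lemma conj_eq_of (α β h : Quaternion ℝ) (hne : h ≠ 0) (hh : h * α = β * h) :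
    α = h⁻¹ * β * h := by
  rw [mul_assoc, ← hh, ← mul_assoc, inv_mul_cancel₀ hne, one_mul]

/-- Two quaternions are conjugate iff they have the same real part and the same norm. -/
theorem stmt0 (α β : Quaternion ℝ) :
    (∃ h : Quaternion ℝ, h ≠ 0 ∧ α = h⁻¹ * β * h) ↔ α.re = β.re ∧ ‖α‖ = ‖β‖ := by
  constructor
  · rintro ⟨h, hne, rfl⟩
    have hns : Quaternion.normSq h ≠ 0 := Quaternion.normSq_ne_zero.2 hne
    constructor
    · rw [Quaternion.inv_def, smul_mul_assoc, smul_mul_assoc, Quaternion.re_smul,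
        re_star_conj, smul_eq_mul, ← mul_assoc, inv_mul_cancel₀ hns, one_mul]
    · rw [norm_mul, norm_mul, norm_inv, mul_comm, ← mul_assoc,
        mul_inv_cancel₀ (norm_ne_zero_iff.2 hne), one_mul]
  · rintro ⟨hre, hnorm⟩
    have hns : Quaternion.normSq α = Quaternion.normSq β := by
      rw [Quaternion.normSq_eq_norm_mul_self, Quaternion.normSq_eq_norm_mul_self, hnorm]
    rw [Quaternion.normSq_def', Quaternion.normSq_def'] at hns
    have key : α.imI ^ 2 + α.imJ ^ 2 + α.imK ^ 2 = β.imI ^ 2 + β.imJ ^ 2 + β.imK ^ 2 := by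
      linear_combination hns - (α.re + β.re) * hre
    by_cases h1 : α - star β ≠ 0
    · refine ⟨α - star β, h1, conj_eq_of _ _ _ h1 ?_⟩
      ext <;>
        simp only [Quaternion.re_mul, Quaternion.imI_mul, Quaternion.imJ_mul, Quaternion.imK_mul,
          Quaternion.re_sub, Quaternion.imI_sub, Quaternion.imJ_sub, Quaternion.imK_sub,
          Quaternion.re_star, Quaternion.imI_star, Quaternion.imJ_star, Quaternion.imK_star]
      · linear_combination (α.re - β.re) * hre - key
      · linear_combination (2 * α.imI) * hre
      · linear_combination (2 * α.imJ) * hre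
      · linear_combination (2 * α.imK) * hre
    · push_neg at h1
      have hb : β = star α := by
        have := sub_eq_zero.mp h1
        rw [this, star_star]
      by_cases h2 : α = β
      · exact ⟨1, one_ne_zero, by simp [h2]⟩
      · -- α = star β ≠ β, so im α ≠ 0
        subst hb
        have him : α.imI ≠ 0 ∨ α.imJ ≠ 0 ∨ α.imK ≠ 0 := by
          by_contra hc
          push_neg at hc
          obtain ⟨h1', h2', h3'⟩ := hc
          exact h2 (by ext <;> simp [h1', h2', h3'])
        by_cases hij : α.imI ≠ 0 ∨ α.imJ ≠ 0
        · set w : Quaternion ℝ := ⟨0, α.imJ, -α.imI, 0⟩ with hw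
          have hwne : w ≠ 0 := by
            intro hz
            rcases hij with h | h
            · exact h (by have := congrArg QuaternionAlgebra.imJ hz; simpa [hw] using this)
            · exact h (by have := congrArg QuaternionAlgebra.imI hz; simpa [hw] using this)
          refine ⟨w, hwne, conj_eq_of _ _ _ hwne ?_⟩
          ext <;>
            simp only [Quaternion.re_mul, Quaternion.imI_mul, Quaternion.imJ_mul,
              Quaternion.imK_mul, Quaternion.re_star, Quaternion.imI_star, Quaternion.imJ_star,
              Quaternion.imK_star] <;> simp only [hw] <;> ring
        · push_neg at hij
          set w : Quaternion ℝ := ⟨0, 1, 0, 0⟩ with hw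
          have hwne : w ≠ 0 := by
            intro hz
            have := congrArg QuaternionAlgebra.imI hz
            simp [hw] at this
          refine ⟨w, hwne, conj_eq_of _ _ _ hwne ?_⟩
          ext <;>
            simp only [hij.1, hij.2, Quaternion.re_mul, Quaternion.imI_mul,
              Quaternion.imJ_mul, Quaternion.imK_mul, Quaternion.re_star, Quaternion.imI_star,
              Quaternion.imJ_star, Quaternion.imK_star] <;> simp only [hw] <;> ring
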